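/- arXiv:2411.19241 — 3 statements merged into one kernel-verified Lean document; each statement's English description precedes it below -/
import Mathlib

section
/- Commutator Lieb-Robinson bound for commuting interactions: if Ψ is a commuting interaction on a finite graph Λ with ‖Ψ‖_F < ∞, then for all disjoint X, Y ⊆ Λ and A ∈ A_X, B ∈ A_Y: ‖[τ_t^Λ(A), B]‖ ≤ 4‖Ψ‖_F · ‖A‖·‖B‖·|t| · Σ_{x∈X}Σ_{y∈Y} F(d(x,y)). -/
set_option maxHeartbeats 1000000
set_option synthInstance.maxHeartbeats 400000



noncomputable section

/-- The algebra of bounded operators on the Hilbert space `⊗_{x ∈ Λ} ℂ^q`, realized as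
`EuclideanSpace ℂ (Λ → Fin q)` (tensor basis indexed by spin configurations). -/
abbrev LatticeOp (Λ : Type*) [Fintype Λ] [DecidableEq Λ] (q : ℕ) :=
  EuclideanSpace ℂ (Λ → Fin q) →L[ℂ] EuclideanSpace ℂ (Λ → Fin q)

variable {Λ : Type*} [Fintype Λ] [DecidableEq Λ] {q : ℕ}

/-- Matrix entry of an operator in the tensor-product (configuration) basis. -/
def entry (A : LatticeOp Λ q) (f g : Λ → Fin q) : ℂ :=
  @inner ℂ _ _ (EuclideanSpace.single f (1 : ℂ)) (A (EuclideanSpace.single g (1 : ℂ)))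

/-- `A ∈ 𝒜_X`: the operator `A` acts as `A' ⊗ 1` for an operator `A'` on `⊗_{x ∈ X} ℂ^q`,
i.e. its matrix elements are diagonal outside `X` and depend only on the restriction to `X`. -/
def IsSupportedOn (X : Finset Λ) (A : LatticeOp Λ q) : Prop :=
  ∃ M : (Λ → Fin q) → (Λ → Fin q) → ℂ,
    (∀ f g f' g' : Λ → Fin q, (∀ i ∈ X, f i = f' i) → (∀ i ∈ X, g i = g' i) → M f g = M f' g') ∧
    ∀ f g : Λ → Fin q, entry A f g = if ∀ i ∉ X, f i = g i then M f g else 0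

/-- Heisenberg evolution `τ_t(A) = e^{itH} A e^{-itH}`. -/
def heis (H : LatticeOp Λ q) (t : ℝ) (A : LatticeOp Λ q) : LatticeOp Λ q :=
  NormedSpace.exp ((Complex.I * (t : ℂ)) • H) * A *
    NormedSpace.exp (-(Complex.I * (t : ℂ)) • H)

/-- The Hamiltonian `H_Λ = Σ_{Z ⊆ Λ} Ψ(Z)`. -/
def hamiltonian (Ψ : Finset Λ → LatticeOp Λ q) : LatticeOp Λ q :=
  ∑ Z : Finset Λ, Ψ Z

/-- An interaction: each `Ψ(Z)` is self-adjoint and supported in `Z`. -/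
def IsInteraction (Ψ : Finset Λ → LatticeOp Λ q) : Prop :=
  ∀ Z : Finset Λ, IsSelfAdjoint (Ψ Z) ∧ IsSupportedOn Z (Ψ Z)

/-- A commuting interaction: all terms pairwise commute. -/
def IsCommutingInteraction (Ψ : Finset Λ → LatticeOp Λ q) : Prop :=
  IsInteraction Ψ ∧ ∀ Z Z' : Finset Λ, Commute (Ψ Z) (Ψ Z')


lemma entry_eq (A : LatticeOp Λ q) (f g : Λ → Fin q) :
    entry A f g = A (EuclideanSpace.single g (1 : ℂ)) f := by
  simp [entry, EuclideanSpace.inner_single_left]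

lemma vec_expand (v : EuclideanSpace ℂ (Λ → Fin q)) :
    v = ∑ h : Λ → Fin q, v h • EuclideanSpace.single h (1 : ℂ) := by
  ext f
  rw [WithLp.ofLp_sum, Finset.sum_apply]
  simp [EuclideanSpace.single_apply]

lemma apply_coord (A : LatticeOp Λ q) (v : EuclideanSpace ℂ (Λ → Fin q)) (f : Λ → Fin q) :
    A v f = ∑ h : Λ → Fin q, v h * entry A f h := by
  conv_lhs => rw [vec_expand v, map_sum]
  rw [WithLp.ofLp_sum, Finset.sum_apply]
  simp [entry_eq]

lemma op_ext {A B : LatticeOp Λ q} (h : ∀ f g, entry A f g = entry B f g) : A = B := by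
  ext v f
  rw [apply_coord, apply_coord]
  exact Finset.sum_congr rfl fun g _ => by rw [h]

lemma entry_mul (A C : LatticeOp Λ q) (f g : Λ → Fin q) :
    entry (A * C) f g = ∑ h : Λ → Fin q, entry A f h * entry C h g := by
  rw [entry_eq]
  show A (C (EuclideanSpace.single g 1)) f = _
  rw [apply_coord]
  exact Finset.sum_congr rfl fun h _ => by rw [entry_eq, entry_eq]; ring

lemma commute_of_disjoint {X Z : Finset Λ} (hXZ : Disjoint X Z)
    {A C : LatticeOp Λ q} (hA : IsSupportedOn X A) (hC : IsSupportedOn Z C) :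
    Commute A C := by
  obtain ⟨M, hM, hMA⟩ := hA
  obtain ⟨P, hP, hPC⟩ := hC
  have hXZ' : ∀ i : Λ, i ∈ X → i ∉ Z := fun i hi => Finset.disjoint_left.mp hXZ hi
  have hZX' : ∀ i : Λ, i ∈ Z → i ∉ X := fun i hi => Finset.disjoint_right.mp hXZ hi
  apply op_ext; intro f g
  rw [entry_mul, entry_mul]
  simp only [hMA, hPC]
  have L : (∑ h : Λ → Fin q, (if ∀ i ∉ X, f i = h i then M f h else 0) *
        (if ∀ i ∉ Z, h i = g i then P h g else 0))
      = if ∀ i, i ∉ X → i ∉ Z → f i = g i then M f g * P f g else 0 := by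
    set h₀ : Λ → Fin q := fun i => if i ∈ X then g i else f i with hh₀
    rw [Finset.sum_eq_single h₀]
    · have p0 : ∀ i ∉ X, f i = h₀ i := fun i hi => by simp [hh₀, hi]
      have hMfg : M f h₀ = M f g :=
        hM f h₀ f g (fun i _ => rfl) (fun i hi => by simp [hh₀, hi])
      have hPfg : P h₀ g = P f g :=
        hP h₀ g f g (fun i hi => by simp [hh₀, hZX' i hi]) (fun i _ => rfl)
      rw [if_pos p0, hMfg, hPfg]
      by_cases hc : ∀ i, i ∉ X → i ∉ Z → f i = g i
      · rw [if_pos, if_pos hc]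
        intro i hi
        by_cases hx : i ∈ X
        · simp [hh₀, hx]
        · simp only [hh₀, if_neg hx]; exact (hc i hx hi).symm ▸ rfl
      · rw [if_neg, if_neg hc, mul_zero]
        intro hq
        exact hc fun i hx hz => by
          have := hq i hz
          simp only [hh₀, if_neg hx] at this
          exact this
    · intro b _ hb
      by_cases h1 : ∀ i ∉ X, f i = b i
      · by_cases h2 : ∀ i ∉ Z, b i = g i
        · exfalso; apply hb; funext i
          by_cases hx : i ∈ X
          · simp only [hh₀, if_pos hx]; exact h2 i (hXZ' i hx)
          · simp only [hh₀, if_neg hx]; exact (h1 i hx).symm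
        · rw [if_neg h2, mul_zero]
      · rw [if_neg h1, zero_mul]
    · intro h; exact absurd (Finset.mem_univ _) h
  have R : (∑ h : Λ → Fin q, (if ∀ i ∉ Z, f i = h i then P f h else 0) *
        (if ∀ i ∉ X, h i = g i then M h g else 0))
      = if ∀ i, i ∉ X → i ∉ Z → f i = g i then M f g * P f g else 0 := by
    set h₁ : Λ → Fin q := fun i => if i ∈ Z then g i else f i with hh₁
    rw [Finset.sum_eq_single h₁]
    · have p0 : ∀ i ∉ Z, f i = h₁ i := fun i hi => by simp [hh₁, hi]
      have hPfg : P f h₁ = P f g :=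
        hP f h₁ f g (fun i _ => rfl) (fun i hi => by simp [hh₁, hi])
      have hMfg : M h₁ g = M f g :=
        hM h₁ g f g (fun i hi => by simp [hh₁, hXZ' i hi]) (fun i _ => rfl)
      rw [if_pos p0, hPfg, hMfg]
      by_cases hc : ∀ i, i ∉ X → i ∉ Z → f i = g i
      · rw [if_pos, if_pos hc, mul_comm]
        intro i hi
        by_cases hz : i ∈ Z
        · simp [hh₁, hz]
        · simp only [hh₁, if_neg hz]; exact hc i hi hz
      · rw [if_neg, if_neg hc, mul_zero]
        intro hq
        exact hc fun i hx hz => by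
          have := hq i hx
          simp only [hh₁, if_neg hz] at this
          exact this
    · intro b _ hb
      by_cases h1 : ∀ i ∉ Z, f i = b i
      · by_cases h2 : ∀ i ∉ X, b i = g i
        · exfalso; apply hb; funext i
          by_cases hz : i ∈ Z
          · simp only [hh₁, if_pos hz]; exact h2 i (hZX' i hz)
          · simp only [hh₁, if_neg hz]; exact (h1 i hz).symm
        · rw [if_neg h2, mul_zero]
      · rw [if_neg h1, zero_mul]
    · intro h; exact absurd (Finset.mem_univ _) h
  rw [L, R]


instance latticeOpNormedAlgebraRat : NormedAlgebra ℚ (LatticeOp Λ q) :=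
  NormedAlgebra.restrictScalars ℚ ℂ _

section AuxExp
open NormedSpace (exp)

lemma skew_norm_le {T : LatticeOp Λ q} (hT : star T = -T) : ‖exp T‖ ≤ 1 := by
  have h1 : star (exp T) * exp T = 1 := by
    rw [NormedSpace.star_exp, hT,
      ← NormedSpace.exp_add_of_commute ((Commute.refl T).neg_left), neg_add_cancel,
      NormedSpace.exp_zero]
  have h2 : ‖exp T‖ * ‖exp T‖ = ‖(1 : LatticeOp Λ q)‖ := by
    rw [← CStarRing.norm_star_mul_self, h1]
  have h3 : ‖(1 : LatticeOp Λ q)‖ ≤ 1 := by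
    rw [ContinuousLinearMap.one_def]; exact ContinuousLinearMap.norm_id_le
  nlinarith [norm_nonneg (exp T)]

lemma star_I_smul {K : LatticeOp Λ q} (hK : IsSelfAdjoint K) (s : ℝ) :
    star ((Complex.I * s) • K) = -((Complex.I * s) • K) := by
  rw [star_smul, hK.star_eq]
  have h1 : star (Complex.I * (s : ℂ)) = -(Complex.I * s) := by simp
  rw [h1]
  exact neg_smul _ K

lemma norm_exp_I_le {K : LatticeOp Λ q} (hK : IsSelfAdjoint K) (s : ℝ) :
    ‖exp ((Complex.I * s) • K)‖ ≤ 1 :=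
  skew_norm_le (star_I_smul hK s)

lemma norm_exp_neg_I_le {K : LatticeOp Λ q} (hK : IsSelfAdjoint K) (s : ℝ) :
    ‖exp (-((Complex.I * s) • K))‖ ≤ 1 :=
  skew_norm_le (by
    have h1 : -((Complex.I * (s : ℝ) : ℂ) • K) = (-(Complex.I * s) : ℂ) • K := (neg_smul _ K).symm
    rw [h1, star_smul, hK.star_eq]
    have h2 : star (-(Complex.I * (s : ℂ))) = Complex.I * s := by simp
    have h3 : (-(Complex.I * (s : ℂ))) • K = -((Complex.I * s) • K) := neg_smul _ K
    rw [h2, h3, neg_neg])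

lemma conj_norm_le {u w : LatticeOp Λ q} (D : LatticeOp Λ q) (hu : ‖u‖ ≤ 1) (hw : ‖w‖ ≤ 1) :
    ‖u * D * w‖ ≤ ‖D‖ := by
  calc ‖u * D * w‖ ≤ ‖u * D‖ * ‖w‖ := norm_mul_le _ _
    _ ≤ (‖u‖ * ‖D‖) * ‖w‖ :=
        mul_le_mul_of_nonneg_right (norm_mul_le u D) (norm_nonneg w)
    _ ≤ (1 * ‖D‖) * 1 := by gcongr <;> positivity
    _ = ‖D‖ := by ring

lemma conj_exp_dist_le {K : LatticeOp Λ q} (hK : IsSelfAdjoint K) (A' : LatticeOp Λ q) (t : ℝ) :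
    ‖exp ((Complex.I * t) • K) * A' * exp (-((Complex.I * t) • K)) - A'‖
      ≤ 2 * ‖K‖ * ‖A'‖ * |t| := by
  set K' : LatticeOp Λ q := Complex.I • K with hK'
  have hsmul : ∀ s : ℝ, s • K' = (Complex.I * s) • K := by
    intro s
    rw [hK', ← smul_assoc]
    congr 1
    rw [Complex.real_smul, mul_comm]
  have hsmulneg : ∀ s : ℝ, s • (-K') = -((Complex.I * s) • K) := by
    intro s
    have h1 : s • (-K') = -(s • K') := smul_neg s K'
    rw [h1, hsmul]
  set f : ℝ → LatticeOp Λ q := fun s => exp (s • K') * A' * exp (s • (-K')) with hf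
  set f' : ℝ → LatticeOp Λ q := fun s =>
    exp (s • K') * K' * A' * exp (s • (-K'))
      + exp (s • K') * A' * (exp (s • (-K')) * -K') with hf'
  have hexpR : (exp : LatticeOp Λ q → LatticeOp Λ q) = exp :=
    rfl
  have hderiv : ∀ s : ℝ, HasDerivAt f (f' s) s := by
    intro s
    have h1 : HasDerivAt (fun u : ℝ => exp (u • K')) (exp (s • K') * K') s := by
      rw [← hexpR]
      exact hasDerivAt_exp_smul_const K' s
    have h2 : HasDerivAt (fun u : ℝ => exp (u • (-K'))) (exp (s • (-K')) * -K') s := by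
      rw [← hexpR]
      exact hasDerivAt_exp_smul_const (-K') s
    exact (h1.mul_const A').mul h2
  have hbound : ∀ s : ℝ, ‖f' s‖ ≤ 2 * ‖K‖ * ‖A'‖ := by
    intro s
    have hu : ‖exp (s • K')‖ ≤ 1 := by rw [hsmul]; exact norm_exp_I_le hK s
    have hw : ‖exp (s • (-K'))‖ ≤ 1 := by rw [hsmulneg]; exact norm_exp_neg_I_le hK s
    have hKnorm : ‖K'‖ = ‖K‖ := by
      rw [hK']
      have h1 : ‖Complex.I • K‖ ≤ ‖K‖ := by
        calc ‖Complex.I • K‖ ≤ ‖Complex.I‖ * ‖K‖ := ContinuousLinearMap.opNorm_smul_le _ _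
          _ = ‖K‖ := by rw [Complex.norm_I, one_mul]
      have h2 : ‖K‖ ≤ ‖Complex.I • K‖ := by
        have h3 : K = (-Complex.I) • (Complex.I • K) := by
          rw [smul_smul]
          simp
        calc ‖K‖ = ‖(-Complex.I) • (Complex.I • K)‖ := by rw [← h3]
          _ ≤ ‖-Complex.I‖ * ‖Complex.I • K‖ := ContinuousLinearMap.opNorm_smul_le _ _
          _ = ‖Complex.I • K‖ := by rw [norm_neg, Complex.norm_I, one_mul]
      linarith
    have hc : Commute (s • (-K')) (-K') := by
      rw [hsmulneg s, hK']
      exact ((((Commute.refl K).smul_left (Complex.I * s)).smul_right Complex.I).neg_left).neg_right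
    have hcomm : exp (s • (-K')) * -K' = -K' * exp (s • (-K')) := (hc.exp_left).eq
    have e1 : ‖exp (s • K') * K' * A' * exp (s • (-K'))‖ ≤ ‖K‖ * ‖A'‖ := by
      have : exp (s • K') * K' * A' * exp (s • (-K'))
          = exp (s • K') * (K' * A') * exp (s • (-K')) := by noncomm_ring
      rw [this]
      calc ‖_‖ ≤ ‖K' * A'‖ := conj_norm_le _ hu hw
        _ ≤ ‖K'‖ * ‖A'‖ := norm_mul_le _ _
        _ = ‖K‖ * ‖A'‖ := by rw [hKnorm]
    have e2 : ‖exp (s • K') * A' * (exp (s • (-K')) * -K')‖ ≤ ‖K‖ * ‖A'‖ := by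
      have : exp (s • K') * A' * (exp (s • (-K')) * -K')
          = exp (s • K') * (A' * -K') * exp (s • (-K')) := by
        rw [hcomm]; noncomm_ring
      rw [this]
      calc ‖_‖ ≤ ‖A' * -K'‖ := conj_norm_le _ hu hw
        _ ≤ ‖A'‖ * ‖-K'‖ := norm_mul_le _ _
        _ = ‖K‖ * ‖A'‖ := by rw [norm_neg, hKnorm, mul_comm]
    calc ‖f' s‖ ≤ _ + _ := norm_add_le _ _
      _ ≤ ‖K‖ * ‖A'‖ + ‖K‖ * ‖A'‖ := add_le_add e1 e2
      _ = 2 * ‖K‖ * ‖A'‖ := by ring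
  have key := Convex.norm_image_sub_le_of_norm_hasDerivWithin_le
    (f := f) (f' := f') (s := (Set.univ : Set ℝ)) (C := 2 * ‖K‖ * ‖A'‖)
    (fun x _ => (hderiv x).hasDerivWithinAt) (fun x _ => hbound x) convex_univ
    (Set.mem_univ 0) (Set.mem_univ t)
  have hf0 : f 0 = A' := by
    have h0 : (0 : ℝ) • K' = 0 := zero_smul ℝ K'
    have h0' : (0 : ℝ) • (-K') = 0 := zero_smul ℝ (-K')
    show exp ((0:ℝ) • K') * A' * exp ((0:ℝ) • (-K')) = A'
    rw [h0, h0', NormedSpace.exp_zero, one_mul, mul_one]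
  have hft : f t = exp ((Complex.I * t) • K) * A' * exp (-((Complex.I * t) • K)) := by
    rw [hf]; simp only [hsmul t, hsmulneg t]
  rw [hft, hf0] at key
  simpa [Real.norm_eq_abs] using key

end AuxExp

/-- Commutator Lieb-Robinson bound for commuting interactions: if `‖Ψ‖_F ≤ N` (with `F > 0`),
then for disjoint `X, Y` and `A ∈ 𝒜_X`, `B ∈ 𝒜_Y`,
`‖[τ_t^Λ(A), B]‖ ≤ 4 N ‖A‖ ‖B‖ |t| Σ_{x∈X} Σ_{y∈Y} F(d(x,y))`. -/
theorem commutator_lrb_commuting [MetricSpace Λ]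
    (Ψ : Finset Λ → LatticeOp Λ q) (hΨ : IsCommutingInteraction Ψ)
    (F : ℝ → ℝ) (hF : ∀ r, 0 < F r) (N : ℝ)
    (hN : ∀ x y : Λ,
      ∑ Z ∈ Finset.univ.filter (fun Z : Finset Λ => x ∈ Z ∧ y ∈ Z), ‖Ψ Z‖ ≤ N * F (dist x y))
    (X Y : Finset Λ) (hXY : Disjoint X Y)
    (A B : LatticeOp Λ q) (hA : IsSupportedOn X A) (hB : IsSupportedOn Y B) (t : ℝ) :
    ‖heis (hamiltonian Ψ) t A * B - B * heis (hamiltonian Ψ) t A‖ ≤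
      4 * N * ‖A‖ * ‖B‖ * |t| * ∑ x ∈ X, ∑ y ∈ Y, F (dist x y) := by
  classical
  obtain ⟨hint, hcm⟩ := hΨ
  set c : ℂ := Complex.I * (t : ℂ) with hc
  set S1 : Finset (Finset Λ) :=
    Finset.univ.filter (fun Z => ¬ Disjoint Z X ∧ ¬ Disjoint Z Y) with hS1
  set S2 : Finset (Finset Λ) :=
    Finset.univ.filter (fun Z => ¬ Disjoint Z X ∧ Disjoint Z Y) with hS2
  set S3 : Finset (Finset Λ) := Finset.univ.filter (fun Z => Disjoint Z X) with hS3
  set K : LatticeOp Λ q := ∑ Z ∈ S1, Ψ Z with hK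
  set H2 : LatticeOp Λ q := ∑ Z ∈ S2, Ψ Z with hH2
  set R : LatticeOp Λ q := ∑ Z ∈ S3, Ψ Z with hR
  -- decomposition of the Hamiltonian
  have hHdecomp : hamiltonian Ψ = K + H2 + R := by
    rw [hamiltonian, hK, hH2, hR, hS1, hS2, hS3]
    rw [← Finset.sum_filter_add_sum_filter_not Finset.univ (fun Z => ¬ Disjoint Z X) Ψ]
    congr 1
    · rw [← Finset.sum_filter_add_sum_filter_not
        (Finset.univ.filter (fun Z => ¬ Disjoint Z X)) (fun Z => ¬ Disjoint Z Y) Ψ]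
      congr 1
      · rw [Finset.filter_filter]
      · rw [Finset.filter_filter]
        congr 1
        ext Z
        simp only [Finset.mem_filter, Finset.mem_univ, true_and, not_not]
    · congr 1
      ext Z
      simp only [Finset.mem_filter, Finset.mem_univ, true_and, not_not]
  -- self-adjointness of the pieces
  have hsa : ∀ s : Finset (Finset Λ), IsSelfAdjoint (∑ Z ∈ s, Ψ Z) := by
    intro s
    have : star (∑ Z ∈ s, Ψ Z) = ∑ Z ∈ s, star (Ψ Z) := star_sum s Ψ
    rw [IsSelfAdjoint, this]
    exact Finset.sum_congr rfl fun Z _ => (hint Z).1.star_eq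
  have hKsa : IsSelfAdjoint K := hsa S1
  have hH2sa : IsSelfAdjoint H2 := hsa S2
  -- commutation facts
  have hSS : ∀ s u : Finset (Finset Λ),
      Commute (∑ Z ∈ s, Ψ Z) (∑ Z' ∈ u, Ψ Z') := fun s u =>
    Commute.sum_left _ _ _ fun Z _ => Commute.sum_right _ _ _ fun Z' _ => hcm Z Z'
  have hKH2 : Commute K H2 := hSS S1 S2
  have hKR : Commute K R := hSS S1 S3
  have hH2R : Commute H2 R := hSS S2 S3
  have hRA : Commute R A := by
    refine Commute.sum_left _ _ _ fun Z hZ => ?_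
    rw [hS3, Finset.mem_filter] at hZ
    exact commute_of_disjoint hZ.2 (hint Z).2 hA
  have hAB : Commute A B := commute_of_disjoint hXY hA hB
  have hH2B : Commute H2 B := by
    refine Commute.sum_left _ _ _ fun Z hZ => ?_
    rw [hS2, Finset.mem_filter] at hZ
    exact commute_of_disjoint hZ.2.2 (hint Z).2 hB
  -- notation for the unitaries
  set U : LatticeOp Λ q := NormedSpace.exp (c • K) with hU
  set V : LatticeOp Λ q := NormedSpace.exp (c • H2) with hV
  set W : LatticeOp Λ q := NormedSpace.exp (c • R) with hW
  set U' : LatticeOp Λ q := NormedSpace.exp ((-c) • K) with hU'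
  set V' : LatticeOp Λ q := NormedSpace.exp ((-c) • H2) with hV'
  set W' : LatticeOp Λ q := NormedSpace.exp ((-c) • R) with hW'
  have smul_comm2 : ∀ (z z' : ℂ) {P Q : LatticeOp Λ q}, Commute P Q →
      Commute (z • P) (z' • Q) := fun z z' P Q h => (h.smul_left z).smul_right z'
  have e1 : NormedSpace.exp (c • (K + H2 + R)) = U * (V * W) := by
    have hsplit : c • (K + H2 + R) = c • K + (c • H2 + c • R) := by
      rw [smul_add, smul_add, add_assoc]
    rw [hsplit, NormedSpace.exp_add_of_commute
      ((smul_comm2 c c hKH2).add_right (smul_comm2 c c hKR)),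
      NormedSpace.exp_add_of_commute (smul_comm2 c c hH2R)]
  have e2 : NormedSpace.exp ((-c) • (K + H2 + R)) = W' * (V' * U') := by
    have hsplit : (-c) • (K + H2 + R) = (-c) • R + ((-c) • H2 + (-c) • K) := by
      rw [smul_add, smul_add]; abel
    rw [hsplit, NormedSpace.exp_add_of_commute
      (((smul_comm2 (-c) (-c) hH2R.symm).add_right (smul_comm2 (-c) (-c) hKR.symm))),
      NormedSpace.exp_add_of_commute (smul_comm2 (-c) (-c) hKH2.symm)]
  have e3 : W * A = A * W := ((hRA.smul_left c).exp_left).eq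
  have e5 : W * W' = 1 := by
    rw [hW, hW', ← NormedSpace.exp_add_of_commute (smul_comm2 c (-c) (Commute.refl R))]
    have hz : c • R + (-c) • R = 0 := by
      calc c • R + (-c) • R = (c + -c) • R := (add_smul c (-c) R).symm
        _ = (0 : ℂ) • R := by rw [add_neg_cancel]
        _ = 0 := zero_smul ℂ R
    rw [hz, NormedSpace.exp_zero]
  have hWAW : W * A * W' = A := by
    rw [e3, mul_assoc, e5, mul_one]
  have hheis : heis (K + H2 + R) t A = U * (V * A * V') * U' := by
    show NormedSpace.exp (c • (K + H2 + R)) * A * NormedSpace.exp ((-c) • (K + H2 + R))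
      = U * (V * A * V') * U'
    rw [e1, e2]
    calc U * (V * W) * A * (W' * (V' * U'))
        = U * (V * (W * A * W') * V') * U' := by noncomm_ring
      _ = U * (V * A * V') * U' := by rw [hWAW]
  set A'' : LatticeOp Λ q := V * A * V' with hA''
  have hA''B : Commute A'' B := by
    have hVB : Commute V B := (hH2B.smul_left c).exp_left
    have hV'B : Commute V' B := (hH2B.smul_left (-c)).exp_left
    exact (hVB.mul_left hAB).mul_left hV'B
  -- norm bounds
  have hVnorm : ‖V‖ ≤ 1 := by
    rw [hV, hc]; exact norm_exp_I_le hH2sa t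
  have hV'norm : ‖V'‖ ≤ 1 := by
    have : (-c) • H2 = -(c • H2) := neg_smul c H2
    rw [hV', this, hc]
    exact norm_exp_neg_I_le hH2sa t
  have hA''norm : ‖A''‖ ≤ ‖A‖ := by
    rw [hA'']; exact conj_norm_le A hVnorm hV'norm
  have hD : ‖U * A'' * U' - A''‖ ≤ 2 * ‖K‖ * ‖A‖ * |t| := by
    have h1 : ‖U * A'' * U' - A''‖ ≤ 2 * ‖K‖ * ‖A''‖ * |t| := by
      have hU'eq : U' = NormedSpace.exp (-(c • K)) := by
        rw [hU']
        congr 1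
        exact neg_smul c K
      rw [hU, hU'eq, hc]
      exact conj_exp_dist_le hKsa A'' t
    calc ‖U * A'' * U' - A''‖ ≤ 2 * ‖K‖ * ‖A''‖ * |t| := h1
      _ ≤ 2 * ‖K‖ * ‖A‖ * |t| := by gcongr
  -- commutator rearrangement
  have hsplit : heis (hamiltonian Ψ) t A * B - B * heis (hamiltonian Ψ) t A
      = (U * A'' * U' - A'') * B - B * (U * A'' * U' - A'') + (A'' * B - B * A'') := by
    rw [hHdecomp, hheis]
    have hgen : ∀ T C B : LatticeOp Λ q,
        T * B - B * T = (T - C) * B - B * (T - C) + (C * B - B * C) := by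
      intro T C B
      rw [sub_mul, mul_sub]
      abel
    exact hgen _ _ _
  have hmain : ‖heis (hamiltonian Ψ) t A * B - B * heis (hamiltonian Ψ) t A‖
      ≤ 2 * ‖B‖ * ‖U * A'' * U' - A''‖ := by
    rw [hsplit, hA''B.eq, sub_self, add_zero]
    calc ‖(U * A'' * U' - A'') * B - B * (U * A'' * U' - A'')‖
        ≤ ‖(U * A'' * U' - A'') * B‖ + ‖B * (U * A'' * U' - A'')‖ := norm_sub_le _ _
      _ ≤ ‖U * A'' * U' - A''‖ * ‖B‖ + ‖B‖ * ‖U * A'' * U' - A''‖ :=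
          add_le_add (norm_mul_le _ _) (norm_mul_le _ _)
      _ = 2 * ‖B‖ * ‖U * A'' * U' - A''‖ := by ring
  -- counting bound on ‖K‖
  set S : ℝ := ∑ x ∈ X, ∑ y ∈ Y, F (dist x y) with hSdef
  have hKnorm : ‖K‖ ≤ N * S := by
    have h0 : ‖K‖ ≤ ∑ Z ∈ S1, ‖Ψ Z‖ := norm_sum_le _ _
    have h1 : ∑ Z ∈ S1, ‖Ψ Z‖
        ≤ ∑ x ∈ X, ∑ y ∈ Y, ∑ Z ∈ Finset.univ.filter (fun Z : Finset Λ => x ∈ Z ∧ y ∈ Z),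
            ‖Ψ Z‖ := by
      have hrhs : ∀ x y : Λ,
          (∑ Z ∈ Finset.univ.filter (fun Z : Finset Λ => x ∈ Z ∧ y ∈ Z), ‖Ψ Z‖)
            = ∑ Z : Finset Λ, (if x ∈ Z ∧ y ∈ Z then ‖Ψ Z‖ else 0) := fun x y =>
        (Finset.sum_filter _ _)
      calc ∑ Z ∈ S1, ‖Ψ Z‖
          ≤ ∑ Z ∈ S1, ∑ x ∈ X, ∑ y ∈ Y, (if x ∈ Z ∧ y ∈ Z then ‖Ψ Z‖ else 0) := by
            refine Finset.sum_le_sum fun Z hZ => ?_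
            rw [hS1, Finset.mem_filter] at hZ
            obtain ⟨x0, hx0Z, hx0X⟩ := Finset.not_disjoint_iff.mp hZ.2.1
            obtain ⟨y0, hy0Z, hy0Y⟩ := Finset.not_disjoint_iff.mp hZ.2.2
            calc ‖Ψ Z‖ = (if x0 ∈ Z ∧ y0 ∈ Z then ‖Ψ Z‖ else 0) :=
                  (if_pos ⟨hx0Z, hy0Z⟩).symm
              _ ≤ ∑ y ∈ Y, (if x0 ∈ Z ∧ y ∈ Z then ‖Ψ Z‖ else 0) :=
                  Finset.single_le_sum
                    (f := fun y => if x0 ∈ Z ∧ y ∈ Z then ‖Ψ Z‖ else 0)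
                    (fun y _ => by positivity) hy0Y
              _ ≤ ∑ x ∈ X, ∑ y ∈ Y, (if x ∈ Z ∧ y ∈ Z then ‖Ψ Z‖ else 0) :=
                  Finset.single_le_sum
                    (f := fun x => ∑ y ∈ Y, if x ∈ Z ∧ y ∈ Z then ‖Ψ Z‖ else 0)
                    (fun x _ => Finset.sum_nonneg fun y _ => by positivity) hx0X
      _ ≤ ∑ Z : Finset Λ, ∑ x ∈ X, ∑ y ∈ Y, (if x ∈ Z ∧ y ∈ Z then ‖Ψ Z‖ else 0) := by
            refine Finset.sum_le_sum_of_subset_of_nonneg (Finset.subset_univ _) ?_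
            intro Z _ _
            exact Finset.sum_nonneg fun x _ => Finset.sum_nonneg fun y _ => by positivity
      _ = ∑ x ∈ X, ∑ Z : Finset Λ, ∑ y ∈ Y, (if x ∈ Z ∧ y ∈ Z then ‖Ψ Z‖ else 0) :=
            Finset.sum_comm
      _ = ∑ x ∈ X, ∑ y ∈ Y, ∑ Z : Finset Λ, (if x ∈ Z ∧ y ∈ Z then ‖Ψ Z‖ else 0) :=
            Finset.sum_congr rfl fun x _ => Finset.sum_comm
      _ = ∑ x ∈ X, ∑ y ∈ Y, ∑ Z ∈ Finset.univ.filter (fun Z : Finset Λ => x ∈ Z ∧ y ∈ Z),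
            ‖Ψ Z‖ := by
            exact Finset.sum_congr rfl fun x _ => Finset.sum_congr rfl fun y _ =>
              (hrhs x y).symm
    have h2 : ∑ x ∈ X, ∑ y ∈ Y, ∑ Z ∈ Finset.univ.filter
          (fun Z : Finset Λ => x ∈ Z ∧ y ∈ Z), ‖Ψ Z‖ ≤ N * S := by
      rw [hSdef, Finset.mul_sum]
      refine Finset.sum_le_sum fun x _ => ?_
      rw [Finset.mul_sum]
      exact Finset.sum_le_sum fun y _ => hN x y
    linarith
  have hSnonneg : 0 ≤ S :=
    Finset.sum_nonneg fun x _ => Finset.sum_nonneg fun y _ => (hF _).le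
  calc ‖heis (hamiltonian Ψ) t A * B - B * heis (hamiltonian Ψ) t A‖
      ≤ 2 * ‖B‖ * ‖U * A'' * U' - A''‖ := hmain
    _ ≤ 2 * ‖B‖ * (2 * ‖K‖ * ‖A‖ * |t|) := by
        have hB0 : (0:ℝ) ≤ 2 * ‖B‖ := by positivity
        exact mul_le_mul_of_nonneg_left hD hB0
    _ = 4 * ‖A‖ * ‖B‖ * |t| * ‖K‖ := by ring
    _ ≤ 4 * ‖A‖ * ‖B‖ * |t| * (N * S) := by
        have h4 : (0:ℝ) ≤ 4 * ‖A‖ * ‖B‖ * |t| := by positivity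
        exact mul_le_mul_of_nonneg_left hKnorm h4
    _ = 4 * N * ‖A‖ * ‖B‖ * |t| * S := by ring
end
end

section
/- Sharpness example (two sites): on ℂ^2 ⊗ ℂ^2 with Hamiltonian H = c·σ^z_x σ^z_y (c ∈ ℝ), observables A = σ^x_x and B = |↑⟩⟨↓|_y + |↓⟩⟨↑|_y, one has ‖[e^{itH} A e^{−itH}, B]‖ ≥ 2|sin(2tc)|. -/
open Kronecker

noncomputable section

/-- Pauli `x` matrix. -/
def pauliX : Matrix (Fin 2) (Fin 2) ℂ := !![0, 1; 1, 0]

/-- Pauli `z` matrix. -/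
def pauliZ : Matrix (Fin 2) (Fin 2) ℂ := !![1, 0; 0, -1]

/-- `σ^z_x σ^z_y` on `ℂ² ⊗ ℂ²`, as an operator on `EuclideanSpace ℂ (Fin 2 × Fin 2)`. -/
def ZZ : EuclideanSpace ℂ (Fin 2 × Fin 2) →L[ℂ] EuclideanSpace ℂ (Fin 2 × Fin 2) :=
  Matrix.toEuclideanCLM (𝕜 := ℂ) (pauliZ ⊗ₖ pauliZ)

/-- `A = σ^x_x`, acting on the first tensor factor. -/
def Aop : EuclideanSpace ℂ (Fin 2 × Fin 2) →L[ℂ] EuclideanSpace ℂ (Fin 2 × Fin 2) :=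
  Matrix.toEuclideanCLM (𝕜 := ℂ) (pauliX ⊗ₖ (1 : Matrix (Fin 2) (Fin 2) ℂ))

/-- `B = |↑⟩⟨↓|_y + |↓⟩⟨↑|_y = σ^x_y`, acting on the second tensor factor. -/
def Bop : EuclideanSpace ℂ (Fin 2 × Fin 2) →L[ℂ] EuclideanSpace ℂ (Fin 2 × Fin 2) :=
  Matrix.toEuclideanCLM (𝕜 := ℂ) ((1 : Matrix (Fin 2) (Fin 2) ℂ) ⊗ₖ pauliX)

section Eigen
variable {E : Type*} [NormedAddCommGroup E] [NormedSpace ℂ E] [CompleteSpace E]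

omit [CompleteSpace E] in
lemma pow_apply_eigen (T : E →L[ℂ] E) (x : E) (μ : ℂ) (h : T x = μ • x) (n : ℕ) :
    (T ^ n) x = μ ^ n • x := by
  induction n with
  | zero => simp
  | succ n ih =>
      rw [pow_succ, pow_succ, ContinuousLinearMap.mul_apply, h, map_smul, ih, smul_smul, mul_comm]

lemma exp_apply_eigen (T : E →L[ℂ] E) (x : E) (μ : ℂ) (h : T x = μ • x) :
    NormedSpace.exp T x = Complex.exp μ • x := by
  rw [NormedSpace.exp_eq_tsum ℂ]
  have hs : Summable fun n : ℕ => (n.factorial : ℂ)⁻¹ • T ^ n :=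
    NormedSpace.expSeries_summable' (𝕂 := ℂ) T
  have key := (ContinuousLinearMap.apply ℂ E x).map_tsum hs
  simp only [ContinuousLinearMap.apply_apply] at key
  rw [key]
  have h2 : ∀ n : ℕ, ((n.factorial : ℂ)⁻¹ • T ^ n) x = ((n.factorial : ℂ)⁻¹ * μ ^ n) • x := by
    intro n
    rw [ContinuousLinearMap.smul_apply, pow_apply_eigen T x μ h, smul_smul]
  rw [tsum_congr h2, Summable.tsum_smul_const ?_, Complex.exp_eq_exp_ℂ, NormedSpace.exp_eq_tsum ℂ]
  · simp [smul_smul]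
  · simpa [smul_eq_mul] using NormedSpace.expSeries_summable' (𝕂 := ℂ) (𝔸 := ℂ) μ

end Eigen

abbrev ee (i j : Fin 2) : EuclideanSpace ℂ (Fin 2 × Fin 2) := EuclideanSpace.single (i, j) 1

lemma ee_eq (a b : Fin 2) :
    ee a b = (WithLp.equiv 2 ((Fin 2 × Fin 2) → ℂ)).symm (Pi.single (a, b) 1) := rfl

lemma ZZ_ee (a b : Fin 2) : ZZ (ee a b) = ((-1 : ℂ) ^ ((a : ℕ) + (b : ℕ))) • ee a b := by
  ext ⟨i, j⟩
  rw [ZZ, ee_eq, WithLp.equiv_symm_apply, Matrix.toEuclideanCLM_toLp]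
  simp only [PiLp.smul_apply, WithLp.ofLp_smul, WithLp.ofLp_toLp, Matrix.mulVec, dotProduct,
    Pi.single_apply, mul_ite, mul_one, mul_zero, Finset.sum_ite_eq', Finset.mem_univ, if_true]
  fin_cases a <;> fin_cases b <;> fin_cases i <;> fin_cases j <;>
    simp [Matrix.kroneckerMap, pauliZ, EuclideanSpace.single, ee_eq]
  all_goals rw [if_neg (by decide)]

lemma Aop_ee (a b : Fin 2) : Aop (ee a b) = ee (1 - a) b := by
  ext ⟨i, j⟩
  rw [Aop, ee_eq, WithLp.equiv_symm_apply, Matrix.toEuclideanCLM_toLp]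
  simp only [WithLp.ofLp_toLp, Matrix.mulVec, dotProduct,
    Pi.single_apply, mul_ite, mul_one, mul_zero, Finset.sum_ite_eq', Finset.mem_univ, if_true]
  fin_cases a <;> fin_cases b <;> fin_cases i <;> fin_cases j <;>
    simp [Matrix.kroneckerMap, pauliX, Matrix.one_apply, EuclideanSpace.single, ee_eq, -PiLp.toLp_single]
  all_goals rw [if_neg (by decide)]

lemma Bop_ee (a b : Fin 2) : Bop (ee a b) = ee a (1 - b) := by
  ext ⟨i, j⟩
  rw [Bop, ee_eq, WithLp.equiv_symm_apply, Matrix.toEuclideanCLM_toLp]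
  simp only [WithLp.ofLp_toLp, Matrix.mulVec, dotProduct,
    Pi.single_apply, mul_ite, mul_one, mul_zero, Finset.sum_ite_eq', Finset.mem_univ, if_true]
  fin_cases a <;> fin_cases b <;> fin_cases i <;> fin_cases j <;>
    simp [Matrix.kroneckerMap, pauliX, Matrix.one_apply, EuclideanSpace.single, ee_eq, -PiLp.toLp_single]
  all_goals rw [if_neg (by decide)]

set_option maxHeartbeats 1000000 in
/-- Sharpness example on two sites: with `H = c σ^z_x σ^z_y`, `A = σ^x_x` and
`B = |↑⟩⟨↓|_y + |↓⟩⟨↑|_y`, one has `‖[e^{itH} A e^{-itH}, B]‖ ≥ 2 |sin(2tc)|`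
for all `t, c ∈ ℝ`. -/
theorem two_site_sharpness (c t : ℝ) :
    2 * |Real.sin (2 * t * c)| ≤
      ‖(NormedSpace.exp ((Complex.I * (t : ℂ)) • ((c : ℂ) • ZZ)) * Aop *
            NormedSpace.exp (-(Complex.I * (t : ℂ)) • ((c : ℂ) • ZZ))) * Bop -
          Bop * (NormedSpace.exp ((Complex.I * (t : ℂ)) • ((c : ℂ) • ZZ)) * Aop *
            NormedSpace.exp (-(Complex.I * (t : ℂ)) • ((c : ℂ) • ZZ)))‖ := by
  rw [show (-(Complex.I * (t : ℂ))) • ((c : ℂ) • ZZ)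
      = -((Complex.I * (t : ℂ)) • ((c : ℂ) • ZZ)) by module]
  set z : ℂ := Complex.I * (t : ℂ) * (c : ℂ) with hz
  set S : EuclideanSpace ℂ (Fin 2 × Fin 2) →L[ℂ] EuclideanSpace ℂ (Fin 2 × Fin 2) :=
    (Complex.I * (t : ℂ)) • ((c : ℂ) • ZZ) with hS
  have hSee : ∀ a b : Fin 2, S (ee a b) = (z * (-1 : ℂ) ^ ((a : ℕ) + (b : ℕ))) • ee a b := by
    intro a b
    rw [hS, ContinuousLinearMap.smul_apply, ContinuousLinearMap.smul_apply, ZZ_ee,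
      smul_smul, smul_smul, hz]
  have hm00 : (-S) (ee 0 0) = (-z) • ee 0 0 := by
    rw [ContinuousLinearMap.neg_apply, hSee]; norm_num
  have hm01 : (-S) (ee 0 1) = z • ee 0 1 := by
    rw [ContinuousLinearMap.neg_apply, hSee]; norm_num
  have h11 : S (ee 1 1) = z • ee 1 1 := by rw [hSee]; norm_num
  have h10 : S (ee 1 0) = (-z) • ee 1 0 := by rw [hSee]; norm_num
  set C := (NormedSpace.exp S * Aop * NormedSpace.exp (-S)) * Bop -
      Bop * (NormedSpace.exp S * Aop * NormedSpace.exp (-S)) with hC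
  have a00 : Aop (ee 0 0) = ee 1 0 := by simpa using Aop_ee 0 0
  have a01 : Aop (ee 0 1) = ee 1 1 := by simpa using Aop_ee 0 1
  have b00 : Bop (ee 0 0) = ee 0 1 := by simpa using Bop_ee 0 0
  have b10 : Bop (ee 1 0) = ee 1 1 := by simpa using Bop_ee 1 0
  have hCe : C (ee 0 0) = (Complex.exp (2 * z) - Complex.exp (-(2 * z))) • ee 1 1 := by
    have e1 : (NormedSpace.exp S * Aop * NormedSpace.exp (-S) * Bop) (ee 0 0)
        = Complex.exp (2 * z) • ee 1 1 := by
      simp only [ContinuousLinearMap.mul_apply, b00, exp_apply_eigen (-S) _ _ hm01,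
        map_smul, a01, exp_apply_eigen S _ _ h11, smul_smul, ← Complex.exp_add]
      rw [two_mul]
    have e2 : (Bop * (NormedSpace.exp S * Aop * NormedSpace.exp (-S))) (ee 0 0)
        = Complex.exp (-(2 * z)) • ee 1 1 := by
      simp only [ContinuousLinearMap.mul_apply, exp_apply_eigen (-S) _ _ hm00,
        map_smul, a00, exp_apply_eigen S _ _ h10, smul_smul, b10, ← Complex.exp_add]
      congr 1
      ring
    rw [hC, ContinuousLinearMap.sub_apply, e1, e2, sub_smul]
  have hnorm : ‖C (ee 0 0)‖ = 2 * |Real.sin (2 * t * c)| := by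
    rw [hCe, norm_smul, EuclideanSpace.norm_single, norm_one, mul_one]
    have h2z : 2 * z = ((2 * t * c : ℝ) : ℂ) * Complex.I := by
      rw [hz]; push_cast; ring
    rw [h2z, show -(((2 * t * c : ℝ) : ℂ) * Complex.I) = ((-(2 * t * c) : ℝ) : ℂ) * Complex.I
      by push_cast; ring, Complex.exp_mul_I, Complex.exp_mul_I]
    have : (Complex.cos ((2 * t * c : ℝ) : ℂ) + Complex.sin ((2 * t * c : ℝ) : ℂ) * Complex.I) -
        (Complex.cos ((-(2 * t * c) : ℝ) : ℂ) + Complex.sin ((-(2 * t * c) : ℝ) : ℂ) * Complex.I)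
        = ((2 * Real.sin (2 * t * c) : ℝ) : ℂ) * Complex.I := by
      push_cast [Complex.cos_neg, Complex.sin_neg]
      ring
    rw [this, norm_mul, Complex.norm_I, Complex.norm_real, Real.norm_eq_abs, mul_one,
      abs_mul, abs_two]
  have hb := C.le_opNorm (ee 0 0)
  rw [EuclideanSpace.norm_single, norm_one, mul_one, hnorm] at hb
  exact hb
end
end

section
/- Perturbed commutator bound: let H be self-adjoint with Heisenberg dynamics satisfying ‖[e^{itH}Be^{−itH}, V]‖ ≤ K·|t| for all t (for fixed bounded B, V). Then the perturbed dynamics satisfies ‖[e^{−it(H+V)} B e^{it(H+V)}, V]‖ ≤ K·|t|·(1 + ‖V‖·|t|) for all t ∈ ℝ. -/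
open NormedSpace

section helpers

variable {𝔸 : Type*} [NormedRing 𝔸] [NormedAlgebra ℂ 𝔸] [CompleteSpace 𝔸]

lemma myexp_add (x : 𝔸) (a b : ℂ) :
    NormedSpace.exp (a • x) * NormedSpace.exp (b • x) = NormedSpace.exp ((a + b) • x) := by
  rw [add_smul]
  let +nondep : NormedAlgebra ℚ 𝔸 := .restrictScalars ℚ ℂ 𝔸
  exact (exp_add_of_commute (((Commute.refl x).smul_right b).smul_left a)).symm

lemma myexp_cancel (x : 𝔸) (a : ℂ) :
    NormedSpace.exp (a • x) * NormedSpace.exp ((-a) • x) = 1 := by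
  rw [myexp_add, add_neg_cancel, zero_smul, exp_zero]

omit [CompleteSpace 𝔸] in
lemma coe_smul_eq (x : 𝔸) (u : ℝ) : (u : ℂ) • x = u • x := by
  rw [← algebraMap_smul ℂ u x, Complex.coe_algebraMap]

lemma myexp_deriv (x : 𝔸) (s : ℝ) :
    HasDerivAt (fun u : ℝ => NormedSpace.exp ((u : ℂ) • x))
      (x * NormedSpace.exp ((s : ℂ) • x)) s := by
  have h := hasDerivAt_exp_smul_const' (𝕂 := ℝ) x s
  simp only [coe_smul_eq] at h ⊢
  exact h

lemma myexp_cont (x : 𝔸) : Continuous fun s : ℝ => NormedSpace.exp ((s : ℂ) • x) := by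
  let +nondep : NormedAlgebra ℚ 𝔸 := .restrictScalars ℚ ℂ 𝔸
  exact exp_continuous.comp (Complex.continuous_ofReal.smul continuous_const)

end helpers

section hilbert

variable {E : Type*} [NormedAddCommGroup E] [InnerProductSpace ℂ E] [FiniteDimensional ℂ E]
  [Nontrivial E]

lemma norm_exp_skew (x : E →L[ℂ] E) (hx : star x = -x) : ‖NormedSpace.exp x‖ = 1 := by
  let +nondep : NormedAlgebra ℚ (E →L[ℂ] E) := .restrictScalars ℚ ℂ (E →L[ℂ] E)
  exact CStarRing.norm_of_mem_unitary
    (exp_mem_unitary_of_mem_skewAdjoint (skewAdjoint.mem_iff.mpr hx))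

lemma norm_exp_unitary (S : E →L[ℂ] E) (hS : IsSelfAdjoint S) (s : ℝ) :
    ‖NormedSpace.exp ((s : ℂ) • (Complex.I • S))‖ = 1 := by
  apply norm_exp_skew
  rw [star_smul, star_smul, hS.star_eq]
  simp [Complex.conj_I, Complex.conj_ofReal, neg_smul, smul_neg]

end hilbert

lemma alg_aux {𝔸 : Type*} [Ring 𝔸] [Algebra ℂ 𝔸] (e₁ e₄ m v w : 𝔸)
    (c1 : (-w) * e₁ = e₁ * (-w)) :
    e₁ * (Complex.I • (m * v - v * m)) * e₄ =
      ((-w) * e₁ * m + e₁ * ((w - Complex.I • v) * m - m * (w - Complex.I • v))) * e₄ +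
        (e₁ * m) * (w * e₄) := by
  rw [c1]
  simp only [mul_sub, sub_mul, add_mul, mul_add, neg_mul, mul_neg, smul_mul_assoc,
    mul_smul_comm, smul_sub, ← mul_assoc]
  abel

set_option maxHeartbeats 1000000 in
/-- Perturbed commutator bound: if the unperturbed Heisenberg dynamics of `B` satisfies
`‖[τ_t(B), V]‖ ≤ K |t|`, then the dynamics perturbed by `V` satisfies
`‖[e^{-it(H+V)} B e^{it(H+V)}, V]‖ ≤ K |t| (1 + ‖V‖ |t|)`. -/
theorem perturbed_commutator_bound
    {E : Type*} [NormedAddCommGroup E] [InnerProductSpace ℂ E] [FiniteDimensional ℂ E]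
    (H V B : E →L[ℂ] E) (hH : IsSelfAdjoint H) (hV : IsSelfAdjoint V) (K : ℝ) (hK : 0 ≤ K)
    (hLRB : ∀ t : ℝ,
      ‖NormedSpace.exp ((Complex.I * (t : ℂ)) • H) * B *
            NormedSpace.exp (-(Complex.I * (t : ℂ)) • H) * V -
          V * (NormedSpace.exp ((Complex.I * (t : ℂ)) • H) * B *
            NormedSpace.exp (-(Complex.I * (t : ℂ)) • H))‖ ≤ K * |t|) :
    ∀ t : ℝ,
      ‖NormedSpace.exp (-(Complex.I * (t : ℂ)) • (H + V)) * B *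
            NormedSpace.exp ((Complex.I * (t : ℂ)) • (H + V)) * V -
          V * (NormedSpace.exp (-(Complex.I * (t : ℂ)) • (H + V)) * B *
            NormedSpace.exp ((Complex.I * (t : ℂ)) • (H + V)))‖ ≤
        K * |t| * (1 + ‖V‖ * |t|) := by
  intro t
  have hRHS : 0 ≤ K * |t| * (1 + ‖V‖ * |t|) := by positivity
  rcases subsingleton_or_nontrivial E with hE | hE
  · haveI : Subsingleton (E →L[ℂ] E) :=
      ⟨fun f g => ContinuousLinearMap.ext fun x => Subsingleton.elim _ _⟩
    rw [Subsingleton.elim (NormedSpace.exp (-(Complex.I * (t : ℂ)) • (H + V)) * B *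
            NormedSpace.exp ((Complex.I * (t : ℂ)) • (H + V)) * V -
          V * (NormedSpace.exp (-(Complex.I * (t : ℂ)) • (H + V)) * B *
            NormedSpace.exp ((Complex.I * (t : ℂ)) • (H + V)))) (0 : E →L[ℂ] E), norm_zero]
    exact hRHS
  set A : E →L[ℂ] E := Complex.I • H with hA
  set W : E →L[ℂ] E := Complex.I • (H + V) with hW
  set D : E →L[ℂ] E :=
    NormedSpace.exp ((-(t : ℂ)) • A) * B * NormedSpace.exp ((t : ℂ) • A) with hD
  set M : ℝ → E →L[ℂ] E := fun s =>
    NormedSpace.exp ((s : ℂ) • A) * D * NormedSpace.exp ((s : ℂ) • (-A)) with hM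
  set f : ℝ → E →L[ℂ] E := fun s =>
    NormedSpace.exp ((s : ℂ) • (-W)) * M s * NormedSpace.exp ((s : ℂ) • W) with hf
  set g : ℝ → E →L[ℂ] E := fun s =>
    NormedSpace.exp ((s : ℂ) • (-W)) * (Complex.I • (M s * V - V * M s)) *
      NormedSpace.exp ((s : ℂ) • W) with hg
  -- exponent conversions
  have conv1 : ∀ u : ℝ, (Complex.I * (u : ℂ)) • H = (u : ℂ) • A := by
    intro u; rw [hA, smul_smul]; congr 1; ring
  have conv2 : ∀ u : ℝ, -(Complex.I * (u : ℂ)) • H = (u : ℂ) • (-A) := by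
    intro u; rw [hA, smul_neg, smul_smul, ← neg_smul]; congr 1; ring
  have conv3 : (Complex.I * (t : ℂ)) • (H + V) = (t : ℂ) • W := by
    rw [hW, smul_smul]; congr 1; ring
  have conv4 : -(Complex.I * (t : ℂ)) • (H + V) = (t : ℂ) • (-W) := by
    rw [hW, smul_neg, smul_smul, ← neg_smul]; congr 1; ring
  have negsmul : ∀ (x : E →L[ℂ] E) (u : ℂ), u • (-x) = (-u) • x := by
    intro x u; rw [smul_neg, neg_smul]
  -- M s in the form of the hypothesis
  have hMs : ∀ s : ℝ, M s =
      NormedSpace.exp ((Complex.I * ((s - t : ℝ) : ℂ)) • H) * B *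
        NormedSpace.exp (-(Complex.I * ((s - t : ℝ) : ℂ)) • H) := by
    intro s
    have h1 : ((s - t : ℝ) : ℂ) • A = (((s : ℂ)) + (-(t : ℂ))) • A := by
      congr 1; push_cast; ring
    have h2 : ((s - t : ℝ) : ℂ) • (-A) = (((t : ℂ)) + (-(s : ℂ))) • A := by
      rw [negsmul]; congr 1; push_cast; ring
    simp only [hM, hD]
    rw [conv1, conv2, h1, h2, negsmul A (s : ℂ), ← myexp_add A (s : ℂ) (-(t : ℂ)),
      ← myexp_add A (t : ℂ) (-(s : ℂ))]
    simp only [← mul_assoc]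
  -- the commutator bound on M
  have hMb : ∀ s : ℝ, ‖M s * V - V * M s‖ ≤ K * |s - t| := by
    intro s; rw [hMs s]; exact hLRB (s - t)
  -- unitarity
  have hu1 : ∀ s : ℝ, ‖NormedSpace.exp ((s : ℂ) • (-W))‖ = 1 := by
    intro s
    rw [show -W = Complex.I • (-(H + V)) by rw [hW, smul_neg]]
    exact norm_exp_unitary _ ((hH.add hV).neg) s
  have hu4 : ∀ s : ℝ, ‖NormedSpace.exp ((s : ℂ) • W)‖ = 1 := by
    intro s; rw [hW]; exact norm_exp_unitary _ (hH.add hV) s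
  -- derivative of M
  have hM_deriv : ∀ s : ℝ, HasDerivAt M (A * M s - M s * A) s := by
    intro s
    have h23 := ((myexp_deriv A s).mul_const D).mul (myexp_deriv (-A) s)
    have hcomm : (-A) * NormedSpace.exp ((s : ℂ) • (-A)) =
        NormedSpace.exp ((s : ℂ) • (-A)) * (-A) :=
      (((Commute.refl (-A)).smul_right ((s : ℂ))).exp_right).eq
    simp only [hM]
    refine h23.congr_deriv (Eq.symm ?_)
    rw [hcomm]
    simp only [mul_neg, neg_mul, ← mul_assoc, sub_eq_add_neg]
  -- derivative of f
  have hf_deriv : ∀ s : ℝ, HasDerivAt f (g s) s := by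
    intro s
    have hfd := ((myexp_deriv (-W) s).mul (hM_deriv s)).mul (myexp_deriv W s)
    have c1 : (-W) * NormedSpace.exp ((s : ℂ) • (-W)) =
        NormedSpace.exp ((s : ℂ) • (-W)) * (-W) :=
      (((Commute.refl (-W)).smul_right ((s : ℂ))).exp_right).eq
    have hAW : A = W - Complex.I • V := by
      rw [hA, hW, smul_add]; exact (add_sub_cancel_right _ _).symm
    simp only [hf, hg]
    refine hfd.congr_deriv (Eq.symm ?_)
    rw [hAW]
    exact alg_aux _ _ (M s) V W c1
  -- norm bound on the derivative
  have hg_bound : ∀ s : ℝ, ‖g s‖ ≤ K * |s - t| := by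
    intro s
    rw [hg]
    calc ‖NormedSpace.exp ((s : ℂ) • (-W)) * (Complex.I • (M s * V - V * M s)) *
            NormedSpace.exp ((s : ℂ) • W)‖
        ≤ ‖NormedSpace.exp ((s : ℂ) • (-W)) * (Complex.I • (M s * V - V * M s))‖ *
            ‖NormedSpace.exp ((s : ℂ) • W)‖ := norm_mul_le _ _
      _ ≤ ‖NormedSpace.exp ((s : ℂ) • (-W))‖ * ‖Complex.I • (M s * V - V * M s)‖ *
            ‖NormedSpace.exp ((s : ℂ) • W)‖ :=
          mul_le_mul_of_nonneg_right (norm_mul_le _ _) (norm_nonneg _)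
      _ = ‖M s * V - V * M s‖ := by
          rw [hu1 s, hu4 s, one_mul, mul_one,
            norm_smul Complex.I (M s * V - V * M s), Complex.norm_I, one_mul]
      _ ≤ K * |s - t| := hMb s
  -- continuity of g
  have hg_cont : Continuous g := by
    have cM : Continuous M := by
      rw [hM]; exact ((myexp_cont A).mul continuous_const).mul (myexp_cont (-A))
    have cX : Continuous fun s => Complex.I • (M s * V - V * M s) :=
      by fun_prop
    rw [hg]
    exact ((myexp_cont (-W)).mul cX).mul (myexp_cont W)
  -- FTC
  have hFTC : ∫ s in (0 : ℝ)..t, g s = f t - f 0 :=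
    intervalIntegral.integral_eq_sub_of_hasDerivAt (fun s _ => hf_deriv s)
      (hg_cont.intervalIntegrable 0 t)
  -- bound on the difference
  have hdiff : ‖f t - f 0‖ ≤ K * t ^ 2 / 2 := by
    rw [← hFTC]
    rcases le_total 0 t with ht | ht
    · calc ‖∫ s in (0 : ℝ)..t, g s‖ ≤ |∫ s in (0 : ℝ)..t, K * (t - s)| := by
            apply intervalIntegral.norm_integral_le_abs_of_norm_le
            · apply (MeasureTheory.ae_restrict_iff' measurableSet_uIoc).mpr
              refine MeasureTheory.ae_of_all _ fun s hs => ?_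
              rw [Set.uIoc_of_le ht] at hs
              have := hg_bound s
              rwa [abs_of_nonpos (by linarith [hs.2]), neg_sub] at this
            · exact (continuous_const.mul (continuous_const.sub continuous_id)).intervalIntegrable 0 t
        _ = K * t ^ 2 / 2 := by
            have : ∫ s in (0 : ℝ)..t, K * (t - s) = K * (t * t - t ^ 2 / 2) := by
              rw [intervalIntegral.integral_const_mul,
                intervalIntegral.integral_sub (intervalIntegrable_const)
                  intervalIntegral.intervalIntegrable_id,
                intervalIntegral.integral_const, integral_id]
              simp
            rw [this, abs_of_nonneg (by nlinarith)]; ring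
    · calc ‖∫ s in (0 : ℝ)..t, g s‖ ≤ |∫ s in (0 : ℝ)..t, K * (s - t)| := by
            apply intervalIntegral.norm_integral_le_abs_of_norm_le
            · apply (MeasureTheory.ae_restrict_iff' measurableSet_uIoc).mpr
              refine MeasureTheory.ae_of_all _ fun s hs => ?_
              rw [Set.uIoc_of_ge ht] at hs
              have := hg_bound s
              rwa [abs_of_nonneg (by linarith [hs.1])] at this
            · exact (continuous_const.mul (continuous_id.sub continuous_const)).intervalIntegrable 0 t
        _ = K * t ^ 2 / 2 := by
            have : ∫ s in (0 : ℝ)..t, K * (s - t) = K * (t ^ 2 / 2 - t * t) := by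
              rw [intervalIntegral.integral_const_mul,
                intervalIntegral.integral_sub intervalIntegral.intervalIntegrable_id
                  (intervalIntegrable_const),
                intervalIntegral.integral_const, integral_id]
              simp
            rw [this, abs_of_nonpos (by nlinarith)]; ring
  -- identify f t with the perturbed evolution and f 0 with the free one
  have hft : NormedSpace.exp (-(Complex.I * (t : ℂ)) • (H + V)) * B *
      NormedSpace.exp ((Complex.I * (t : ℂ)) • (H + V)) = f t := by
    rw [conv3, conv4]
    simp only [hf, hM, hD]
    have hmid : NormedSpace.exp ((t : ℂ) • A) *
        (NormedSpace.exp ((-(t : ℂ)) • A) * B * NormedSpace.exp ((t : ℂ) • A)) *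
        NormedSpace.exp ((t : ℂ) • (-A)) = B := by
      rw [negsmul A (t : ℂ)]
      simp only [← mul_assoc]
      rw [myexp_cancel A (t : ℂ), one_mul, mul_assoc, myexp_cancel A (t : ℂ), mul_one]
    rw [hmid]
  have hf0 : ‖f 0 * V - V * f 0‖ ≤ K * |t| := by
    have h0 : f 0 = M 0 := by
      simp only [hf, Complex.ofReal_zero, zero_smul, NormedSpace.exp_zero, one_mul, mul_one]
    rw [h0, hMs 0]
    have htt := hLRB (0 - t)
    rw [zero_sub] at htt ⊢
    rwa [abs_neg] at htt
  -- assemble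
  rw [hft]
  have hsplit : f t * V - V * f t =
      (f 0 * V - V * f 0) + ((f t - f 0) * V - V * (f t - f 0)) := by noncomm_ring
  have habs : |t| * |t| = t ^ 2 := by rw [abs_mul_abs_self]; ring
  calc ‖f t * V - V * f t‖
      ≤ ‖f 0 * V - V * f 0‖ + (‖(f t - f 0) * V‖ + ‖V * (f t - f 0)‖) := by
        rw [hsplit]
        exact (norm_add_le _ _).trans (by gcongr; exact norm_sub_le _ _)
    _ ≤ K * |t| + (‖f t - f 0‖ * ‖V‖ + ‖V‖ * ‖f t - f 0‖) :=
        add_le_add hf0 (add_le_add (norm_mul_le _ _) (norm_mul_le _ _))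
    _ ≤ K * |t| + (K * t ^ 2 / 2 * ‖V‖ + ‖V‖ * (K * t ^ 2 / 2)) := by gcongr
    _ = K * |t| * (1 + ‖V‖ * |t|) := by linear_combination (-(K * ‖V‖)) * habs
end
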